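/- Let A, B be nonzero reals and a = (a₁,a₂), b = (b₁,b₂) unit vectors in ℝ², and define φ, ψ : ℝ² → ℝ by φ(x,y) = (A/2)(a₁x+a₂y)², ψ(x,y) = (B/2)(b₁x+b₂y)². If L + N = 0 at the origin, where L = φ_xy ψ_yy − φ_yy ψ_xy and N = φ_xx ψ_xy − φ_xy ψ_xx, then AB (a·b)(a₁b₂ − a₂b₁) = 0; hence either a and b are parallel or a ⊥ b. -/

import Mathlib

/-- Partial derivative with respect to the first variable. -/
noncomputable def pdx (f : ℝ → ℝ → ℝ) : ℝ → ℝ → ℝ :=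
  fun x y => deriv (fun t => f t y) x

/-- Partial derivative with respect to the second variable. -/
noncomputable def pdy (f : ℝ → ℝ → ℝ) : ℝ → ℝ → ℝ :=
  fun x y => deriv (fun t => f x t) y

lemma deriv_sq_aux (C c d : ℝ) (x : ℝ) :
    deriv (fun t => (C/2)*(c*t+d)^2) x = C*(c*x+d)*c := by
  have h : HasDerivAt (fun t : ℝ => (C/2)*(c*t+d)^2) (C*(c*x+d)*c) x := by
    have h1 : HasDerivAt (fun t : ℝ => c*t+d) c x := by
      simpa using ((hasDerivAt_id x).const_mul c).add_const d
    have := ((h1.pow 2).const_mul (C/2))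
    refine this.congr_deriv ?_
    norm_num
    ring
  exact h.deriv

lemma deriv_lin_aux (C c d : ℝ) (x : ℝ) :
    deriv (fun t => C*(c*t+d)) x = C*c := by
  have h : HasDerivAt (fun t : ℝ => C*(c*t+d)) (C*c) x := by
    have h1 : HasDerivAt (fun t : ℝ => c*t+d) c x := by
      simpa using ((hasDerivAt_id x).const_mul c).add_const d
    simpa using h1.const_mul C
  exact h.deriv

lemma pd_vals (C c d : ℝ) (f : ℝ → ℝ → ℝ)
    (hf : f = fun x y => (C/2)*(c*x + d*y)^2) :
    pdy (pdx f) 0 0 = C*c*d ∧ pdx (pdx f) 0 0 = C*c*c ∧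
    pdy (pdy f) 0 0 = C*d*d := by
  subst hf
  have hx : pdx (fun x y => (C/2)*(c*x + d*y)^2) = fun x y => C*(c*(c*x+d*y)) := by
    funext x y
    simp only [pdx]
    rw [deriv_sq_aux C c (d*y) x]
    ring
  have hy : pdy (fun x y => (C/2)*(c*x + d*y)^2) = fun x y => C*(d*(c*x+d*y)) := by
    funext x y
    simp only [pdy]
    have : (fun t => (C/2)*(c*x + d*t)^2) = (fun t => (C/2)*(d*t + c*x)^2) := by
      funext t; ring_nf
    rw [this, deriv_sq_aux C d (c*x) y]
    ring
  refine ⟨?_, ?_, ?_⟩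
  · rw [hx]; simp only [pdy]
    have : (fun t => C*(c*(c*0+d*t))) = (fun t => (C*c)*(d*t + 0)) := by
      funext t; ring
    rw [this, deriv_lin_aux (C*c) d 0 0]
  · rw [hx]; simp only [pdx]
    have : (fun t => C*(c*(c*t+d*0))) = (fun t => (C*c)*(c*t + 0)) := by
      funext t; ring
    rw [this, deriv_lin_aux (C*c) c 0 0]
  · rw [hy]; simp only [pdy]
    have : (fun t => C*(d*(c*0+d*t))) = (fun t => (C*d)*(d*t + 0)) := by
      funext t; ring
    rw [this, deriv_lin_aux (C*d) d 0 0]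

/-- for φ = (A/2)(a₁x+a₂y)², ψ = (B/2)(b₁x+b₂y)² with a, b unit vectors
and A, B ≠ 0, if L + N = 0 at the origin (L = φ_xy ψ_yy − φ_yy ψ_xy,
N = φ_xx ψ_xy − φ_xy ψ_xx), then AB(a₁b₂ − a₂b₁) = 0; hence a and b are
parallel or orthogonal. -/
theorem stmt_5 (A B a₁ a₂ b₁ b₂ : ℝ) (hA : A ≠ 0) (hB : B ≠ 0)
    (ha : a₁^2 + a₂^2 = 1) (hb : b₁^2 + b₂^2 = 1)
    (φ ψ : ℝ → ℝ → ℝ)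
    (hφ : φ = fun x y => (A/2) * (a₁*x + a₂*y)^2)
    (hψ : ψ = fun x y => (B/2) * (b₁*x + b₂*y)^2)
    (hLN : pdy (pdx φ) 0 0 * pdy (pdy ψ) 0 0 - pdy (pdy φ) 0 0 * pdy (pdx ψ) 0 0
         + pdx (pdx φ) 0 0 * pdy (pdx ψ) 0 0 - pdy (pdx φ) 0 0 * pdx (pdx ψ) 0 0 = 0) :
    A * B * (a₁*b₁ + a₂*b₂) * (a₁*b₂ - a₂*b₁) = 0 ∧
    (a₁*b₂ - a₂*b₁ = 0 ∨ a₁*b₁ + a₂*b₂ = 0) := by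
  obtain ⟨hφ1, hφ2, hφ3⟩ := pd_vals A a₁ a₂ φ hφ
  obtain ⟨hψ1, hψ2, hψ3⟩ := pd_vals B b₁ b₂ ψ hψ
  rw [hφ1, hφ2, hφ3, hψ1, hψ2, hψ3] at hLN
  have key : A * B * ((a₁*b₁ + a₂*b₂) * (a₁*b₂ - a₂*b₁)) = 0 := by
    rw [← hLN]; ring
  have key2 : (a₁*b₁ + a₂*b₂) * (a₁*b₂ - a₂*b₁) = 0 := by
    have := mul_ne_zero hA hB
    rcases mul_eq_zero.1 key with h | h
    · exact absurd h this
    · exact h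
  constructor
  · rw [← mul_assoc] at key; exact key
  · rcases mul_eq_zero.1 key2 with h | h
    · exact Or.inr h
    · exact Or.inl h
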